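/- Let H be a Hopf algebra and V a left H-module. Fix c ∈ V. Then the assignment (f ⊗ g) ⊗ e ↦ (f ⊗ g_{(1)}) ⊗_H e · (S(g_{(2)}) c), defined on H ⊗ H ⊗ V and viewed as taking values in (H ⊗ H) ⊗_H V, descends to a well-defined linear map Φ: (H ⊗ H) ⊗_H V → (H ⊗ H) ⊗_H V, i.e., it satisfies Φ(f ⊗ g ⊗ h·e) = Φ(fh_{(1)} ⊗ gh_{(2)} ⊗ e) for all h ∈ H. -/

import Mathlib

set_option linter.unusedSectionVars false


open TensorProduct Coalgebra

noncomputable section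

section Conv


variable {R : Type*} {A : Type*} [CommSemiring R] [Semiring A] [HopfAlgebra R A]

/-- convolution product on `Hom(A ⊗ A, A)` -/
def conv (f g : A ⊗[R] A →ₗ[R] A) : A ⊗[R] A →ₗ[R] A :=
  LinearMap.mul' R A
    ∘ₗ TensorProduct.map f g
    ∘ₗ (TensorProduct.tensorTensorTensorComm R A A A A).toLinearMap
    ∘ₗ TensorProduct.map Coalgebra.comul Coalgebra.comul

lemma conv_tmul {ι κ : Type*} (f g : A ⊗[R] A →ₗ[R] A) (a b : A) (ra : Coalgebra.Repr R a ι)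
    (rb : Coalgebra.Repr R b κ) :
    conv f g (a ⊗ₜ[R] b)
      = ∑ i ∈ ra.index, ∑ j ∈ rb.index,
          f (ra.left i ⊗ₜ[R] rb.left j) * g (ra.right i ⊗ₜ[R] rb.right j) := by
  simp [conv, ← ra.eq, ← rb.eq, sum_tmul, tmul_sum, map_sum]
  rw [Finset.sum_comm]

/-- the unit for convolution -/
def cunit : A ⊗[R] A →ₗ[R] A :=
  (Algebra.linearMap R A)
    ∘ₗ (TensorProduct.lid R R).toLinearMap
    ∘ₗ TensorProduct.map Coalgebra.counit Coalgebra.counit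

lemma cunit_tmul (a b : A) :
    (cunit (a ⊗ₜ[R] b) : A) = algebraMap R A (counit a * counit b) := by
  simp [cunit, Algebra.smul_def]


lemma sum_counit_smul {ι : Type*} (a : A) (r : Coalgebra.Repr R a ι) :
    ∑ i ∈ r.index, counit (R := R) (r.right i) • r.left i = a := by
  have h := Coalgebra.sum_tmul_counit_eq (R := R) r
  have h2 := congrArg (TensorProduct.rid R A) h
  rw [map_sum] at h2
  simpa only [rid_tmul, one_smul] using h2

lemma sum_counit_smul' {ι : Type*} (a : A) (r : Coalgebra.Repr R a ι) :
    ∑ i ∈ r.index, counit (R := R) (r.left i) • r.right i = a := by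
  have h := Coalgebra.sum_counit_tmul_eq (R := R) r
  have h2 := congrArg (TensorProduct.lid R A) h
  rw [map_sum] at h2
  simpa only [lid_tmul, one_smul] using h2

lemma conv_cunit_right (f : A ⊗[R] A →ₗ[R] A) : conv f cunit = f := by
  apply TensorProduct.ext'
  intro a b
  have ra := Coalgebra.Repr.arbitrary R a
  have rb := Coalgebra.Repr.arbitrary R b
  rw [conv_tmul f cunit a b ra rb]
  have : ∀ i j, f (ra.left i ⊗ₜ[R] rb.left j) * cunit (ra.right i ⊗ₜ[R] rb.right j)
      = (counit (R := R) (ra.right i)) • (counit (R := R) (rb.right j)) •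
          f (ra.left i ⊗ₜ[R] rb.left j) := by
    intro i j
    rw [cunit_tmul, ← Algebra.commutes, ← Algebra.smul_def, mul_smul]
  calc ∑ i ∈ ra.index, ∑ j ∈ rb.index,
        f (ra.left i ⊗ₜ[R] rb.left j) * cunit (ra.right i ⊗ₜ[R] rb.right j)
      = ∑ i ∈ ra.index, ∑ j ∈ rb.index,
          f ((counit (R := R) (ra.right i) • ra.left i) ⊗ₜ[R]
             (counit (R := R) (rb.right j) • rb.left j)) := by
        refine Finset.sum_congr rfl fun i _ => Finset.sum_congr rfl fun j _ => ?_
        rw [this i j]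
        simp only [← smul_tmul', tmul_smul, map_smul]
        rw [smul_comm]
    _ = f (a ⊗ₜ[R] b) := by
        calc _ = f ((∑ i ∈ ra.index, counit (R := R) (ra.right i) • ra.left i) ⊗ₜ[R]
                 (∑ j ∈ rb.index, counit (R := R) (rb.right j) • rb.left j)) := by
                rw [sum_tmul, map_sum]
                refine Finset.sum_congr rfl fun i _ => ?_
                rw [tmul_sum, map_sum]
          _ = f (a ⊗ₜ[R] b) := by rw [sum_counit_smul a ra, sum_counit_smul b rb]


lemma conv_cunit_left (f : A ⊗[R] A →ₗ[R] A) : conv cunit f = f := by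
  apply TensorProduct.ext'
  intro a b
  have ra := Coalgebra.Repr.arbitrary R a
  have rb := Coalgebra.Repr.arbitrary R b
  rw [conv_tmul cunit f a b ra rb]
  have key : ∀ i j, cunit (ra.left i ⊗ₜ[R] rb.left j) * f (ra.right i ⊗ₜ[R] rb.right j)
      = (counit (R := R) (ra.left i)) • (counit (R := R) (rb.left j)) •
          f (ra.right i ⊗ₜ[R] rb.right j) := by
    intro i j
    rw [cunit_tmul, ← Algebra.smul_def, mul_smul]
  calc ∑ i ∈ ra.index, ∑ j ∈ rb.index,
        cunit (ra.left i ⊗ₜ[R] rb.left j) * f (ra.right i ⊗ₜ[R] rb.right j)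
      = ∑ i ∈ ra.index, ∑ j ∈ rb.index,
          f ((counit (R := R) (ra.left i) • ra.right i) ⊗ₜ[R]
             (counit (R := R) (rb.left j) • rb.right j)) := by
        refine Finset.sum_congr rfl fun i _ => Finset.sum_congr rfl fun j _ => ?_
        rw [key i j]
        simp only [← smul_tmul', tmul_smul, map_smul]
        rw [smul_comm]
    _ = f (a ⊗ₜ[R] b) := by
        calc _ = f ((∑ i ∈ ra.index, counit (R := R) (ra.left i) • ra.right i) ⊗ₜ[R]
                 (∑ j ∈ rb.index, counit (R := R) (rb.left j) • rb.right j)) := by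
                rw [sum_tmul, map_sum]
                refine Finset.sum_congr rfl fun i _ => ?_
                rw [tmul_sum, map_sum]
          _ = f (a ⊗ₜ[R] b) := by rw [sum_counit_smul' a ra, sum_counit_smul' b rb]

/-- `S ∘ mul` -/
def Fm : A ⊗[R] A →ₗ[R] A := HopfAlgebra.antipode R ∘ₗ LinearMap.mul' R A

/-- `mul ∘ (S ⊗ S) ∘ τ` -/
def Gm : A ⊗[R] A →ₗ[R] A :=
  LinearMap.mul' R A ∘ₗ TensorProduct.map (HopfAlgebra.antipode R) (HopfAlgebra.antipode R)
    ∘ₗ (TensorProduct.comm R A A).toLinearMap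

lemma conv_Fm_mul : conv (Fm (R := R) (A := A)) (LinearMap.mul' R A) = cunit := by
  apply TensorProduct.ext'
  intro a b
  have ra := Coalgebra.Repr.arbitrary R a
  have rb := Coalgebra.Repr.arbitrary R b
  rw [conv_tmul _ _ a b ra rb, cunit_tmul]
  have hsum : ∑ i ∈ ra.index, ∑ j ∈ rb.index,
      (ra.left i * rb.left j) ⊗ₜ[R] (ra.right i * rb.right j) = comul (R := R) (a * b) := by
    rw [Bialgebra.comul_mul, ← ra.eq, ← rb.eq, Finset.sum_mul_sum]
    simp [Algebra.TensorProduct.tmul_mul_tmul]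
  calc ∑ i ∈ ra.index, ∑ j ∈ rb.index,
        Fm (ra.left i ⊗ₜ[R] rb.left j) * (LinearMap.mul' R A) (ra.right i ⊗ₜ[R] rb.right j)
      = LinearMap.mul' R A ((HopfAlgebra.antipode (R := R)).rTensor A
          (∑ i ∈ ra.index, ∑ j ∈ rb.index,
            (ra.left i * rb.left j) ⊗ₜ[R] (ra.right i * rb.right j))) := by
        simp [Fm, map_sum]
    _ = algebraMap R A (counit (R := R) (a * b)) := by
        rw [hsum, HopfAlgebra.mul_antipode_rTensor_comul_apply]
    _ = algebraMap R A (counit (R := R) a * counit (R := R) b) := by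
        rw [Bialgebra.counit_mul]

lemma conv_mul_Gm : conv (LinearMap.mul' R A) (Gm (R := R) (A := A)) = cunit := by
  apply TensorProduct.ext'
  intro a b
  have ra := Coalgebra.Repr.arbitrary R a
  have rb := Coalgebra.Repr.arbitrary R b
  rw [conv_tmul _ _ a b ra rb, cunit_tmul]
  calc ∑ i ∈ ra.index, ∑ j ∈ rb.index,
        (LinearMap.mul' R A) (ra.left i ⊗ₜ[R] rb.left j) * Gm (ra.right i ⊗ₜ[R] rb.right j)
      = ∑ i ∈ ra.index, ra.left i *
          ((∑ j ∈ rb.index, rb.left j * HopfAlgebra.antipode (R := R) (rb.right j)) *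
            HopfAlgebra.antipode (R := R) (ra.right i)) := by
        refine Finset.sum_congr rfl fun i _ => ?_
        rw [Finset.sum_mul, Finset.mul_sum]
        refine Finset.sum_congr rfl fun j _ => ?_
        simp [Gm, mul_assoc]
    _ = ∑ i ∈ ra.index, counit (R := R) b •
          (ra.left i * HopfAlgebra.antipode (R := R) (ra.right i)) := by
        refine Finset.sum_congr rfl fun i _ => ?_
        rw [HopfAlgebra.sum_mul_antipode_eq_algebraMap_counit rb, ← Algebra.smul_def, mul_smul_comm]
    _ = algebraMap R A (counit (R := R) a * counit (R := R) b) := by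
        rw [← Finset.smul_sum, HopfAlgebra.sum_mul_antipode_eq_algebraMap_counit ra]
        rw [Algebra.smul_def, ← map_mul, mul_comm]


lemma map_sum_tmul_sum {M N P : Type*} [AddCommMonoid M] [AddCommMonoid N]
    [AddCommMonoid P] [Module R M] [Module R N] [Module R P]
    (W : M ⊗[R] N →ₗ[R] P) {ι κ : Type*} (s : Finset ι) (t : Finset κ)
    (u : ι → M) (v : κ → N) :
    W ((∑ i ∈ s, u i) ⊗ₜ[R] (∑ j ∈ t, v j)) = ∑ i ∈ s, ∑ j ∈ t, W (u i ⊗ₜ[R] v j) := by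
  rw [sum_tmul, map_sum]
  refine Finset.sum_congr rfl fun i _ => ?_
  rw [tmul_sum, map_sum]

lemma conv_assoc (f g k : A ⊗[R] A →ₗ[R] A) :
    conv (conv f g) k = conv f (conv g k) := by
  apply TensorProduct.ext'
  intro a b
  have ra := Coalgebra.Repr.arbitrary R a
  have rb := Coalgebra.Repr.arbitrary R b
  let ra1 : ∀ i : ra.ι, Coalgebra.Repr R (ra.left i) (A × A) := fun i => Coalgebra.Repr.arbitrary R _
  let ra2 : ∀ i : ra.ι, Coalgebra.Repr R (ra.right i) (A × A) := fun i => Coalgebra.Repr.arbitrary R _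
  let rb1 : ∀ j : rb.ι, Coalgebra.Repr R (rb.left j) (A × A) := fun j => Coalgebra.Repr.arbitrary R _
  let rb2 : ∀ j : rb.ι, Coalgebra.Repr R (rb.right j) (A × A) := fun j => Coalgebra.Repr.arbitrary R _
  let W : (A ⊗[R] (A ⊗[R] A)) ⊗[R] (A ⊗[R] (A ⊗[R] A)) →ₗ[R] A :=
    LinearMap.mul' R A
      ∘ₗ TensorProduct.map f (LinearMap.mul' R A ∘ₗ TensorProduct.map g k
          ∘ₗ (TensorProduct.tensorTensorTensorComm R A A A A).toLinearMap)
      ∘ₗ (TensorProduct.tensorTensorTensorComm R A (A ⊗[R] A) A (A ⊗[R] A)).toLinearMap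
  have hW : ∀ (x y z u v w : A),
      W ((x ⊗ₜ[R] (y ⊗ₜ[R] z)) ⊗ₜ[R] (u ⊗ₜ[R] (v ⊗ₜ[R] w)))
        = f (x ⊗ₜ[R] u) * (g (y ⊗ₜ[R] v) * k (z ⊗ₜ[R] w)) := by
    intro x y z u v w
    simp [W]
  have hXa := Coalgebra.sum_tmul_tmul_eq ra ra1 ra2
  have hXb := Coalgebra.sum_tmul_tmul_eq rb rb1 rb2
  have e1 : conv (conv f g) k (a ⊗ₜ[R] b)
      = W ((∑ i ∈ ra.index, ∑ m ∈ (ra1 i).index,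
              (ra1 i).left m ⊗ₜ[R] ((ra1 i).right m ⊗ₜ[R] ra.right i)) ⊗ₜ[R]
           (∑ j ∈ rb.index, ∑ n ∈ (rb1 j).index,
              (rb1 j).left n ⊗ₜ[R] ((rb1 j).right n ⊗ₜ[R] rb.right j))) := by
    rw [conv_tmul _ _ a b ra rb, map_sum_tmul_sum]
    refine Finset.sum_congr rfl fun i _ => Finset.sum_congr rfl fun j _ => ?_
    rw [conv_tmul f g _ _ (ra1 i) (rb1 j), Finset.sum_mul, map_sum_tmul_sum]
    refine Finset.sum_congr rfl fun m _ => ?_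
    rw [Finset.sum_mul]
    refine Finset.sum_congr rfl fun n _ => ?_
    rw [mul_assoc, hW]
  have e2 : conv f (conv g k) (a ⊗ₜ[R] b)
      = W ((∑ i ∈ ra.index, ∑ p ∈ (ra2 i).index,
              ra.left i ⊗ₜ[R] ((ra2 i).left p ⊗ₜ[R] (ra2 i).right p)) ⊗ₜ[R]
           (∑ j ∈ rb.index, ∑ q ∈ (rb2 j).index,
              rb.left j ⊗ₜ[R] ((rb2 j).left q ⊗ₜ[R] (rb2 j).right q))) := by
    rw [conv_tmul _ _ a b ra rb, map_sum_tmul_sum]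
    refine Finset.sum_congr rfl fun i _ => Finset.sum_congr rfl fun j _ => ?_
    rw [conv_tmul g k _ _ (ra2 i) (rb2 j), Finset.mul_sum, map_sum_tmul_sum]
    refine Finset.sum_congr rfl fun p _ => ?_
    rw [Finset.mul_sum]
    refine Finset.sum_congr rfl fun q _ => ?_
    rw [hW]
  rw [e1, e2, hXa, hXb]

lemma antipode_mul' (a b : A) :
    HopfAlgebra.antipode (R := R) (a * b)
      = HopfAlgebra.antipode (R := R) b * HopfAlgebra.antipode (R := R) a := by
  have : Fm (R := R) (A := A) = Gm (R := R) (A := A) := by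
    calc Fm (R := R) (A := A) = conv Fm cunit := (conv_cunit_right _).symm
      _ = conv Fm (conv (LinearMap.mul' R A) Gm) := by rw [conv_mul_Gm]
      _ = conv (conv Fm (LinearMap.mul' R A)) Gm := (conv_assoc _ _ _).symm
      _ = conv cunit Gm := by rw [conv_Fm_mul]
      _ = Gm := conv_cunit_left _
  have h := congrArg (fun φ : A ⊗[R] A →ₗ[R] A => φ (a ⊗ₜ[R] b)) this
  simpa [Fm, Gm] using h


/-- product of two representations -/
@[reducible] def mulRepr {ι κ : Type*} (x y : A) (rx : Coalgebra.Repr R x ι) (ry : Coalgebra.Repr R y κ) :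
    Coalgebra.Repr R (x * y) (ι × κ) where
  index := rx.index ×ˢ ry.index
  left := fun p => rx.left p.1 * ry.left p.2
  right := fun p => rx.right p.1 * ry.right p.2
  eq := by
    rw [Finset.sum_product]
    rw [show Coalgebra.comul (R := R) (x * y) = Coalgebra.comul x * Coalgebra.comul y from
      Bialgebra.comul_mul x y, ← rx.eq, ← ry.eq, Finset.sum_mul_sum]
    simp [Algebra.TensorProduct.tmul_mul_tmul]


end Conv

variable (F : Type*) [Field F] [CharZero F]
variable (H : Type*) [Ring H] [HopfAlgebra F H]
variable (V : Type*) [NonUnitalCommRing V] [Module F V] [Module H V]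
  [IsScalarTower F H V] [SMulCommClass F H V]
  [IsScalarTower F V V] [SMulCommClass F V V]

/-- action of `H` on `V` as a bilinear map -/
def hAct : H →ₗ[F] V →ₗ[F] V :=
  LinearMap.mk₂ F (· • ·) (fun h h' v => add_smul h h' v)
    (fun r h v => smul_assoc r h v) (fun h v v' => smul_add h v v')
    (fun r h v => (smul_comm r h v).symm)

/-- the balancing submodule defining `(H ⊗ H) ⊗_H V`, where `H` acts on `H ⊗ H`
on the right via the coproduct. -/
def relSub : Submodule F ((H ⊗[F] H) ⊗[F] V) :=
  Submodule.span F
    {x | ∃ (w : H ⊗[F] H) (h : H) (v : V),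
      x = (w * Coalgebra.comul h) ⊗ₜ[F] v - w ⊗ₜ[F] (h • v)}

/-- `k ⊗ e ↦ e * (S(k) • c)` -/
def rmulAct (c : V) : H →ₗ[F] V →ₗ[F] V :=
  LinearMap.mk₂ F (fun k e => e * (HopfAlgebra.antipode (R := F) k • c))
    (fun k k' e => by simp [map_add, add_smul, mul_add])
    (fun r k e => by simp [map_smul, smul_assoc, mul_smul_comm])
    (fun k e e' => by simp [add_mul])
    (fun r k e => by simp [smul_mul_assoc])

/-- `(f ⊗ g) ⊗ e ↦ (f ⊗ g₍₁₎) ⊗ (e * (S(g₍₂₎) • c))` -/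
def Phi (c : V) : (H ⊗[F] H) ⊗[F] V →ₗ[F] (H ⊗[F] H) ⊗[F] V :=
  (TensorProduct.map LinearMap.id (TensorProduct.lift (rmulAct F H V c)))
    ∘ₗ (TensorProduct.assoc F (H ⊗[F] H) H V).toLinearMap
    ∘ₗ (TensorProduct.map (TensorProduct.assoc F H H H).symm.toLinearMap LinearMap.id)
    ∘ₗ (TensorProduct.map (TensorProduct.map LinearMap.id Coalgebra.comul) LinearMap.id)


lemma rel_mkQ (w : H ⊗[F] H) (k : H) (v : V) :
    (relSub F H V).mkQ ((w * Coalgebra.comul k) ⊗ₜ[F] v)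
      = (relSub F H V).mkQ (w ⊗ₜ[F] (k • v)) := by
  rw [Submodule.mkQ_apply, Submodule.mkQ_apply]
  exact (Submodule.Quotient.eq _).2 (Submodule.subset_span ⟨w, k, v, rfl⟩)

set_option synthInstance.maxHeartbeats 1000000 in
set_option maxHeartbeats 1000000 in
lemma phi_tmul {ι : Type*} (c : V) (x y : H) (e : V) (r : Coalgebra.Repr F y ι) :
    Phi F H V c ((x ⊗ₜ[F] y) ⊗ₜ[F] e)
      = ∑ j ∈ r.index, (x ⊗ₜ[F] r.left j) ⊗ₜ[F]
          (e * (HopfAlgebra.antipode (R := F) (r.right j) • c)) := by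
  simp [Phi, ← r.eq, sum_tmul, tmul_sum, map_sum, rmulAct]

lemma mul_tmul_comul {ι : Type*} (x y k : H) (rk : Coalgebra.Repr F k ι) :
    (x ⊗ₜ[F] y) * Coalgebra.comul k
      = ∑ i ∈ rk.index, (x * rk.left i) ⊗ₜ[F] (y * rk.right i) := by
  rw [← rk.eq, Finset.mul_sum]
  simp [Algebra.TensorProduct.tmul_mul_tmul]

/-- `p ⊗ q ↦ (p • u) * (q • v)` -/
def Psi (u v : V) : H ⊗[F] H →ₗ[F] V :=
  TensorProduct.lift (LinearMap.mk₂ F (fun p q => (p • u) * (q • v))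
    (fun p p' q => by simp [add_smul, add_mul])
    (fun r p q => by simp [smul_assoc, smul_mul_assoc])
    (fun p q q' => by simp [add_smul, mul_add])
    (fun r p q => by simp [smul_assoc, mul_smul_comm]))

@[simp] lemma Psi_tmul (u v : V) (p q : H) :
    Psi F H V u v (p ⊗ₜ[F] q) = (p • u) * (q • v) := by
  simp [Psi]

lemma collapse {ι κ Λ : Type*} (h : H) (rh : Coalgebra.Repr F h ι)
    (ra : ∀ i : rh.ι, Coalgebra.Repr F (rh.left i) κ)
    (rb : ∀ i : rh.ι, Coalgebra.Repr F (rh.right i) Λ) :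
    ∑ i ∈ rh.index, ∑ m ∈ (ra i).index,
        (ra i).left m ⊗ₜ[F]
          ((ra i).right m * HopfAlgebra.antipode (R := F) (rh.right i))
      = h ⊗ₜ[F] (1 : H) := by
  have key := Coalgebra.sum_tmul_tmul_eq rh ra rb
  have hM := congrArg (LinearMap.lTensor H
    (LinearMap.mul' F H ∘ₗ LinearMap.lTensor H (HopfAlgebra.antipode (R := F) (A := H)))) key
  simp only [map_sum, LinearMap.lTensor_tmul, LinearMap.coe_comp, Function.comp_apply,
    LinearMap.mul'_apply] at hM
  rw [hM]
  have : ∀ i : rh.ι, ∑ k ∈ (rb i).index,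
      rh.left i ⊗ₜ[F] ((rb i).left k * HopfAlgebra.antipode (R := F) ((rb i).right k))
      = Coalgebra.counit (R := F) (rh.right i) • (rh.left i ⊗ₜ[F] (1 : H)) := by
    intro i
    rw [← tmul_sum, HopfAlgebra.sum_mul_antipode_eq_algebraMap_counit (rb i),
      Algebra.algebraMap_eq_smul_one, tmul_smul]
  rw [Finset.sum_congr rfl fun i _ => this i]
  simp only [smul_tmul']
  rw [← sum_tmul, sum_counit_smul h rh]

set_option synthInstance.maxHeartbeats 1000000 in
set_option maxHeartbeats 1000000 in
lemma hdiff_repr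
    (hdiff : ∀ (h : H) (a b : V),
      h • (a * b)
        = (LinearMap.mul' F V)
            ((TensorProduct.map (TensorProduct.lift (hAct F H V))
                (TensorProduct.lift (hAct F H V)))
              ((TensorProduct.tensorTensorTensorComm F H H V V)
                (Coalgebra.comul h ⊗ₜ[F] (a ⊗ₜ[F] b)))))
    {ι : Type*} (a : H) (r : Coalgebra.Repr F a ι) (u v : V) :
    a • (u * v) = ∑ j ∈ r.index, (r.left j • u) * (r.right j • v) := by
  rw [hdiff a u v, ← r.eq]
  simp [sum_tmul, map_sum, hAct]

theorem stmt3
    -- `H` is cocommutative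
    (hcc : ∀ h : H, (TensorProduct.comm F H H) (Coalgebra.comul h) = Coalgebra.comul h)
    -- `V` is an `H`-differential algebra: `h • (a b) = (h₍₁₎ • a)(h₍₂₎ • b)`
    (hdiff : ∀ (h : H) (a b : V),
      h • (a * b)
        = (LinearMap.mul' F V)
            ((TensorProduct.map (TensorProduct.lift (hAct F H V))
                (TensorProduct.lift (hAct F H V)))
              ((TensorProduct.tensorTensorTensorComm F H H V V)
                (Coalgebra.comul h ⊗ₜ[F] (a ⊗ₜ[F] b)))))
    (c : V) :
    ∀ (f g h : H) (e : V),
      (relSub F H V).mkQ (Phi F H V c (((f ⊗ₜ[F] g) * Coalgebra.comul h) ⊗ₜ[F] e))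
        = (relSub F H V).mkQ (Phi F H V c ((f ⊗ₜ[F] g) ⊗ₜ[F] (h • e))) := by
  intro f g h e
  have rh := Coalgebra.Repr.arbitrary F h
  have rg := Coalgebra.Repr.arbitrary F g
  have ra : ∀ i : rh.ι, Coalgebra.Repr F (rh.left i) (H × H) := fun i => Coalgebra.Repr.arbitrary F _
  have rb : ∀ i : rh.ι, Coalgebra.Repr F (rh.right i) (H × H) := fun i => Coalgebra.Repr.arbitrary F _
  calc (relSub F H V).mkQ (Phi F H V c (((f ⊗ₜ[F] g) * Coalgebra.comul h) ⊗ₜ[F] e))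
      = ∑ i ∈ rh.index, (relSub F H V).mkQ (Phi F H V c
          (((f * rh.left i) ⊗ₜ[F] (g * rh.right i)) ⊗ₜ[F] e)) := by
        rw [mul_tmul_comul F H f g h rh, sum_tmul, map_sum, map_sum]
    _ = ∑ i ∈ rh.index, ∑ j ∈ rg.index, ∑ k ∈ (rb i).index,
          (relSub F H V).mkQ (((f * rh.left i) ⊗ₜ[F] (rg.left j * (rb i).left k)) ⊗ₜ[F]
            (e * (HopfAlgebra.antipode (R := F) ((rb i).right k) •
              (HopfAlgebra.antipode (R := F) (rg.right j) • c)))) := by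
        refine Finset.sum_congr rfl fun i _ => ?_
        rw [phi_tmul F H V c _ _ e (mulRepr (R := F) g (rh.right i) rg (rb i)), map_sum,
          show (mulRepr (R := F) g (rh.right i) rg (rb i)).index
            = rg.index ×ˢ (rb i).index from rfl, Finset.sum_product]
        refine Finset.sum_congr rfl fun j _ => Finset.sum_congr rfl fun k _ => ?_
        rw [show (mulRepr (R := F) g (rh.right i) rg (rb i)).right (j, k)
            = rg.right j * (rb i).right k from rfl,
          show (mulRepr (R := F) g (rh.right i) rg (rb i)).left (j, k)
            = rg.left j * (rb i).left k from rfl,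
          antipode_mul', mul_smul]
    _ = ∑ j ∈ rg.index, ∑ i ∈ rh.index, ∑ k ∈ (rb i).index,
          (relSub F H V).mkQ (((f * rh.left i) ⊗ₜ[F] (rg.left j * (rb i).left k)) ⊗ₜ[F]
            (e * (HopfAlgebra.antipode (R := F) ((rb i).right k) •
              (HopfAlgebra.antipode (R := F) (rg.right j) • c)))) := by
        rw [Finset.sum_comm]
    _ = ∑ j ∈ rg.index, ∑ i ∈ rh.index, ∑ m ∈ (ra i).index,
          (relSub F H V).mkQ (((f * (ra i).left m) ⊗ₜ[F] (rg.left j * (ra i).right m)) ⊗ₜ[F]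
            (e * (HopfAlgebra.antipode (R := F) (rh.right i) •
              (HopfAlgebra.antipode (R := F) (rg.right j) • c)))) := by
        refine Finset.sum_congr rfl fun j _ => ?_
        have key := congrArg ((relSub F H V).mkQ
              ∘ₗ (TensorProduct.assoc F H H V).symm.toLinearMap
              ∘ₗ TensorProduct.map (LinearMap.mulLeft F f)
                  (TensorProduct.map (LinearMap.mulLeft F (rg.left j))
                    (((rmulAct F H V (HopfAlgebra.antipode (R := F) (rg.right j) • c)).flip) e)))
          (Coalgebra.sum_tmul_tmul_eq rh ra rb)
        simp only [map_sum, LinearMap.coe_comp, LinearEquiv.coe_coe, Function.comp_apply,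
          TensorProduct.map_tmul, TensorProduct.assoc_symm_tmul, LinearMap.mulLeft_apply,
          LinearMap.flip_apply, rmulAct, LinearMap.mk₂_apply] at key
        exact key.symm
    _ = ∑ j ∈ rg.index, ∑ i ∈ rh.index,
          (relSub F H V).mkQ ((f ⊗ₜ[F] rg.left j) ⊗ₜ[F]
            (rh.left i • (e * (HopfAlgebra.antipode (R := F) (rh.right i) •
              (HopfAlgebra.antipode (R := F) (rg.right j) • c))))) := by
        refine Finset.sum_congr rfl fun j _ => Finset.sum_congr rfl fun i _ => ?_
        rw [← rel_mkQ F H V (f ⊗ₜ[F] rg.left j) (rh.left i),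
          mul_tmul_comul F H f (rg.left j) (rh.left i) (ra i), sum_tmul, map_sum]
    _ = ∑ j ∈ rg.index, ∑ i ∈ rh.index, ∑ m ∈ (ra i).index,
          (relSub F H V).mkQ ((f ⊗ₜ[F] rg.left j) ⊗ₜ[F]
            (((ra i).left m • e) * (((ra i).right m * HopfAlgebra.antipode (R := F) (rh.right i)) •
              (HopfAlgebra.antipode (R := F) (rg.right j) • c)))) := by
        refine Finset.sum_congr rfl fun j _ => Finset.sum_congr rfl fun i _ => ?_
        rw [hdiff_repr F H V hdiff (rh.left i) (ra i) e _, tmul_sum, map_sum]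
        refine Finset.sum_congr rfl fun m _ => ?_
        rw [← mul_smul]
    _ = ∑ j ∈ rg.index,
          (relSub F H V).mkQ ((f ⊗ₜ[F] rg.left j) ⊗ₜ[F]
            ((h • e) * (HopfAlgebra.antipode (R := F) (rg.right j) • c))) := by
        refine Finset.sum_congr rfl fun j _ => ?_
        have e3 : (relSub F H V).mkQ ((f ⊗ₜ[F] rg.left j) ⊗ₜ[F]
            ((h • e) * (HopfAlgebra.antipode (R := F) (rg.right j) • c)))
            = ∑ i ∈ rh.index, ∑ m ∈ (ra i).index,
              (relSub F H V).mkQ ((f ⊗ₜ[F] rg.left j) ⊗ₜ[F]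
                (((ra i).left m • e) *
                  (((ra i).right m * HopfAlgebra.antipode (R := F) (rh.right i)) •
                    (HopfAlgebra.antipode (R := F) (rg.right j) • c)))) := by
          rw [show (h • e) * (HopfAlgebra.antipode (R := F) (rg.right j) • c)
              = Psi F H V e (HopfAlgebra.antipode (R := F) (rg.right j) • c)
                  (h ⊗ₜ[F] (1 : H)) from by simp,
            ← collapse F H h rh ra rb, map_sum]
          simp only [map_sum, tmul_sum, Psi_tmul]
        exact e3.symm
    _ = (relSub F H V).mkQ (Phi F H V c ((f ⊗ₜ[F] g) ⊗ₜ[F] (h • e))) := by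
        rw [phi_tmul F H V c f g (h • e) rg, map_sum]
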